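/- Let M : ℝⁿ → ℝⁿ be μ-strongly monotone and L₀-Lipschitz. For α > 0 define the 2×2 symmetric matrix A(α) with entries a₁₁ = α²L₀²/N − 2αμ/N + 1, a₁₂ = a₂₁ = α²LL₀/√N + α(L + σL₀/√N), a₂₂ = α²L² + 2ασ²L + σ², where L ∈ [μ, L₀], σ ∈ (0,1), N ≥ 1. Then there exists ᾱ > 0 (depending on N, L, L₀, μ, σ) such that for all α ∈ (0, ᾱ): a₁₁ ∈ (0,1) and the matrix I₂ − A(α) is positive definite, hence ρ(A(α)) < 1. -/

import Mathlib

open RealInnerProductSpace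

/-- Spectral radius of a real square matrix: supremum of the moduli of its
complex eigenvalues. -/
noncomputable def specRad {n : ℕ} (A : Matrix (Fin n) (Fin n) ℝ) : ℝ :=
  sSup ((fun z : ℂ => ‖z‖) '' spectrum ℂ (A.map (algebraMap ℝ ℂ)))

lemma posdef_fin_two {a b d : ℝ} (ha : 0 < a) (hdet : 0 < a * d - b ^ 2) :
    (!![a, b; b, d]).PosDef := by
  rw [Matrix.posDef_iff_dotProduct_mulVec]
  constructor
  · ext i j
    fin_cases i <;> fin_cases j <;>
      simp [Matrix.conjTranspose, Matrix.transpose, Matrix.vecHead, Matrix.vecTail]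
  · intro x hx
    have h : dotProduct (star x) ((!![a, b; b, d]).mulVec x)
        = a * x 0 ^ 2 + 2 * b * (x 0 * x 1) + d * x 1 ^ 2 := by
      simp [dotProduct, Matrix.mulVec, Fin.sum_univ_two, Matrix.vecHead, Matrix.vecTail]
      ring
    rw [h]
    rcases eq_or_ne (x 1) 0 with h1 | h1
    · have h0 : x 0 ≠ 0 := by
        intro h0; apply hx; ext i; fin_cases i <;> simp [h0, h1]
      have := sq_pos_of_ne_zero h0
      rw [h1]
      nlinarith [mul_pos ha this]
    · have := sq_pos_of_ne_zero h1
      nlinarith [sq_nonneg (a * x 0 + b * x 1), mul_pos hdet this]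

lemma specRad_fin_two_lt_one {a b d : ℝ} (ha : 0 < a) (hd : 0 < d)
    (hdetA : 0 < a * d - b ^ 2) (hT : a + d < 2)
    (hdetI : 0 < (1 - a) * (1 - d) - b ^ 2) :
    specRad !![a, b; b, d] < 1 := by
  set T : ℝ := a + d with hTdef
  set D : ℝ := a * d - b ^ 2 with hDdef
  have hΔ : 0 ≤ (a - d) ^ 2 + 4 * b ^ 2 := by positivity
  set s : ℝ := Real.sqrt ((a - d) ^ 2 + 4 * b ^ 2) with hsdef
  have hs2 : s ^ 2 = (a - d) ^ 2 + 4 * b ^ 2 := Real.sq_sqrt hΔ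
  have hs0 : 0 ≤ s := Real.sqrt_nonneg _
  have hT0 : 0 < T := by simp [hTdef]; linarith
  have hsT : s < T := by nlinarith
  have hs2T : s < 2 - T := by nlinarith
  set l1 : ℝ := (T - s) / 2 with hl1
  set l2 : ℝ := (T + s) / 2 with hl2
  have hl10 : 0 < l1 := by simp [hl1]; linarith
  have hl12 : l1 ≤ l2 := by simp [hl1, hl2]; linarith
  have hl21 : l2 < 1 := by simp [hl2]; linarith
  have hsum : l1 + l2 = T := by rw [hl1, hl2]; ring
  have hprod : l1 * l2 = D := by rw [hl1, hl2]; nlinarith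
  have hle : specRad !![a, b; b, d] ≤ l2 := by
    apply Real.sSup_le
    · rintro r ⟨z, hz, rfl⟩
      rw [spectrum.mem_iff] at hz
      have hdet0 : Matrix.det (algebraMap ℂ (Matrix (Fin 2) (Fin 2) ℂ) z -
          (!![a, b; b, d]).map (algebraMap ℝ ℂ)) = 0 := by
        by_contra h
        exact hz ((Matrix.isUnit_iff_isUnit_det _).2 (isUnit_iff_ne_zero.2 h))
      have hq : (z - (a : ℂ)) * (z - (d : ℂ)) - (b : ℂ) * (b : ℂ) = 0 := by
        rw [Matrix.det_fin_two] at hdet0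
        simpa [Matrix.algebraMap_matrix_apply] using hdet0
      have hfac : (z - (l1 : ℂ)) * (z - (l2 : ℂ)) = 0 := by
        have hsum' : l1 + l2 = a + d := by rw [hsum]
        have hprod' : l1 * l2 = a * d - b * b := by rw [hprod, hDdef]; ring
        have h1 : (l1 : ℂ) + l2 = (a : ℂ) + d := by exact_mod_cast hsum'
        have h2 : (l1 : ℂ) * l2 = (a : ℂ) * d - b * b := by exact_mod_cast hprod'
        linear_combination hq - z * h1 + h2
      rcases mul_eq_zero.1 hfac with h | h
      · rw [sub_eq_zero.1 h]
        simp only [Complex.norm_real, Real.norm_eq_abs]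
        rw [abs_of_pos hl10]; exact hl12
      · rw [sub_eq_zero.1 h]
        simp only [Complex.norm_real, Real.norm_eq_abs]
        rw [abs_of_pos (lt_of_lt_of_le hl10 hl12)]
    · linarith
  linarith

lemma aux_ineqs {μ L L₀ σ Nr s α : ℝ}
    (hμ : 0 < μ) (hμL : μ ≤ L) (hLL₀ : L ≤ L₀) (hσ0 : 0 < σ) (hσ1 : σ < 1)
    (hNr : 1 ≤ Nr) (hs : 0 < s)
    (hα : 0 < α) (hα1 : α < 1)
    (hα2 : α < μ / L₀ ^ 2)
    (hα3 : α < Nr / (4 * μ))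
    (hα4 : α < σ / (2 * (L + σ * L₀ / s + L * L₀ / s)))
    (hα5 : α < (1 - σ ^ 2) / (2 * (2 * σ ^ 2 * L + L ^ 2)))
    (hα6 : α < μ * (1 - σ ^ 2) / (2 * Nr * (L + σ * L₀ / s + L * L₀ / s) ^ 2)) :
    (0 < α ^ 2 * L₀ ^ 2 / Nr - 2 * α * μ / Nr + 1 ∧
      α ^ 2 * L₀ ^ 2 / Nr - 2 * α * μ / Nr + 1 < 1) ∧
    (0 < α ^ 2 * L ^ 2 + 2 * α * σ ^ 2 * L + σ ^ 2 ∧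
      α ^ 2 * L ^ 2 + 2 * α * σ ^ 2 * L + σ ^ 2 < 1) ∧
    (α ^ 2 * L₀ ^ 2 / Nr - 2 * α * μ / Nr + 1) +
      (α ^ 2 * L ^ 2 + 2 * α * σ ^ 2 * L + σ ^ 2) < 2 ∧
    0 < (α ^ 2 * L₀ ^ 2 / Nr - 2 * α * μ / Nr + 1) *
        (α ^ 2 * L ^ 2 + 2 * α * σ ^ 2 * L + σ ^ 2) -
        (α ^ 2 * L * L₀ / s + α * (L + σ * L₀ / s)) ^ 2 ∧
    0 < (1 - (α ^ 2 * L₀ ^ 2 / Nr - 2 * α * μ / Nr + 1)) *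
        (1 - (α ^ 2 * L ^ 2 + 2 * α * σ ^ 2 * L + σ ^ 2)) -
        (α ^ 2 * L * L₀ / s + α * (L + σ * L₀ / s)) ^ 2 := by
  have hL : 0 < L := lt_of_lt_of_le hμ hμL
  have hL₀ : 0 < L₀ := lt_of_lt_of_le hL hLL₀
  have hNr0 : 0 < Nr := lt_of_lt_of_le one_pos hNr
  have h1σ : 0 < 1 - σ ^ 2 := by nlinarith
  set c : ℝ := L + σ * L₀ / s + L * L₀ / s with hc
  clear_value c
  have hσLs : 0 ≤ σ * L₀ / s := div_nonneg (mul_nonneg hσ0.le hL₀.le) hs.le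
  have hLLs : 0 ≤ L * L₀ / s := div_nonneg (mul_nonneg hL.le hL₀.le) hs.le
  have hcpos : 0 < c := by rw [hc]; linarith
  have hd2 : 0 < 2 * σ ^ 2 * L + L ^ 2 := by positivity
  -- unfold the α bounds
  have hαL₀ : α * L₀ ^ 2 < μ := (lt_div_iff₀ (by positivity)).1 hα2
  have hα4μ : α * (4 * μ) < Nr := (lt_div_iff₀ (by positivity)).1 hα3
  have hα2c : α * (2 * c) < σ := (lt_div_iff₀ (by linarith)).1 hα4
  have hαd : α * (2 * (2 * σ ^ 2 * L + L ^ 2)) < 1 - σ ^ 2 :=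
    (lt_div_iff₀ (by positivity)).1 hα5
  have hαlast : α * (2 * Nr * c ^ 2) < μ * (1 - σ ^ 2) :=
    (lt_div_iff₀ (by positivity)).1 hα6
  have hαsq : α ^ 2 ≤ α := by
    calc α ^ 2 = α * α := sq α
    _ ≤ α * 1 := mul_le_mul_of_nonneg_left hα1.le hα.le
    _ = α := mul_one α
  set e1 : ℝ := α ^ 2 * L₀ ^ 2 / Nr - 2 * α * μ / Nr + 1 with he1
  set e2 : ℝ := α ^ 2 * L * L₀ / s + α * (L + σ * L₀ / s) with he2
  set e3 : ℝ := α ^ 2 * L ^ 2 + 2 * α * σ ^ 2 * L + σ ^ 2 with he3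
  clear_value e1 e2 e3
  have h1a : 1 - e1 = α * (2 * μ - α * L₀ ^ 2) / Nr := by rw [he1]; ring
  have h2μ : 0 < 2 * μ - α * L₀ ^ 2 := by linarith
  have h1a_pos : 0 < 1 - e1 := by
    rw [h1a]; exact div_pos (mul_pos hα h2μ) hNr0
  have h1a_lb : α * μ / Nr ≤ 1 - e1 := by
    rw [h1a]
    gcongr
    linarith [mul_nonneg hα.le (by linarith : (0:ℝ) ≤ μ - α * L₀ ^ 2)]
  have h1a_ub : 1 - e1 ≤ α * (2 * μ) / Nr := by
    rw [h1a]
    gcongr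
    linarith [mul_nonneg hα.le (sq_nonneg L₀)]
  have hhalf : α * (2 * μ) / Nr < 1 / 2 := by
    rw [div_lt_iff₀ hNr0]; linarith [hα4μ]
  have he1_half : 1 / 2 < e1 := by linarith
  have he1_lt1 : e1 < 1 := by linarith
  have he3_lb : σ ^ 2 ≤ e3 := by
    rw [he3]
    linarith [mul_nonneg (mul_nonneg hα.le (sq_nonneg σ)) hL.le,
      mul_nonneg (sq_nonneg α) (sq_nonneg L)]
  have h1d_lb : (1 - σ ^ 2) / 2 ≤ 1 - e3 := by
    rw [he3]
    linarith [mul_le_mul_of_nonneg_right hαsq (sq_nonneg L)]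
  have he3_pos : 0 < e3 := lt_of_lt_of_le (pow_pos hσ0 2) he3_lb
  have he3_lt1 : e3 < 1 := by linarith
  -- bounds on e2
  have he2_nonneg : 0 ≤ e2 := by
    rw [he2]
    have h1 : 0 ≤ α ^ 2 * L * L₀ / s :=
      div_nonneg (mul_nonneg (mul_nonneg (sq_nonneg α) hL.le) hL₀.le) hs.le
    have h2 : 0 ≤ α * (L + σ * L₀ / s) := mul_nonneg hα.le (by linarith)
    linarith
  have he2_le : e2 ≤ α * c := by
    rw [he2, hc]
    have expand : α * (L + σ * L₀ / s + L * L₀ / s) -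
        (α ^ 2 * L * L₀ / s + α * (L + σ * L₀ / s)) = (α - α ^ 2) * (L * L₀ / s) := by
      ring
    linarith [mul_nonneg (by linarith : (0:ℝ) ≤ α - α ^ 2) hLLs, expand]
  have he2_sq : e2 ^ 2 ≤ α ^ 2 * c ^ 2 := by
    calc e2 ^ 2 = e2 * e2 := sq e2
    _ ≤ (α * c) * (α * c) :=
        mul_le_mul he2_le he2_le he2_nonneg (mul_nonneg hα.le hcpos.le)
    _ = α ^ 2 * c ^ 2 := by ring
  have hαc0 : 0 ≤ α * c := mul_nonneg hα.le hcpos.le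
  -- det A > 0
  have hsq : (α * (2 * c)) * (α * (2 * c)) < σ * σ :=
    mul_lt_mul'' hα2c hα2c (by linarith) (by linarith)
  have h1 : α ^ 2 * c ^ 2 < σ ^ 2 / 4 := by linarith [hsq]
  have h2 : σ ^ 2 / 2 < e1 * e3 := by
    have hA : e1 * σ ^ 2 ≤ e1 * e3 :=
      mul_le_mul_of_nonneg_left he3_lb (by linarith)
    have hB : 1 / 2 * σ ^ 2 < e1 * σ ^ 2 :=
      mul_lt_mul_of_pos_right he1_half (pow_pos hσ0 2)
    linarith
  have hdetA : 0 < e1 * e3 - e2 ^ 2 := by linarith [pow_pos hσ0 2]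
  -- det (I - A) > 0
  have hprod_lb : (α * μ / Nr) * ((1 - σ ^ 2) / 2) ≤ (1 - e1) * (1 - e3) :=
    mul_le_mul h1a_lb h1d_lb (by linarith) h1a_pos.le
  have hmul := mul_lt_mul_of_pos_left hαlast hα
  have hkey : α ^ 2 * c ^ 2 < α * μ / Nr * ((1 - σ ^ 2) / 2) := by
    rw [show α * μ / Nr * ((1 - σ ^ 2) / 2) = α * (μ * (1 - σ ^ 2)) / (2 * Nr) by ring,
      lt_div_iff₀ (by positivity)]
    linarith [hmul]
  have hdetI : 0 < (1 - e1) * (1 - e3) - e2 ^ 2 := by linarith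
  exact ⟨⟨by linarith, he1_lt1⟩, ⟨he3_pos, he3_lt1⟩, by linarith, hdetA, hdetI⟩

lemma one_sub_fin_two (a b d : ℝ) :
    (1 : Matrix (Fin 2) (Fin 2) ℝ) - !![a, b; b, d] = !![1 - a, -b; -b, 1 - d] := by
  ext i j
  fin_cases i <;> fin_cases j <;>
    simp [Matrix.one_apply, Matrix.vecHead, Matrix.vecTail]

/-- for the 2×2 symmetric matrix A(α) arising in the convergence
analysis, there exists ᾱ > 0 such that for all α ∈ (0, ᾱ): a₁₁ ∈ (0,1),
I₂ − A(α) is positive definite, and hence ρ(A(α)) < 1. -/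
theorem step_size_matrix_spectral_radius_lt_one
    (d N : ℕ) (hN : 1 ≤ N)
    (M : EuclideanSpace ℝ (Fin d) → EuclideanSpace ℝ (Fin d))
    (μ L L₀ σ : ℝ) (hμ : 0 < μ) (hμL : μ ≤ L) (hLL₀ : L ≤ L₀)
    (hσ : σ ∈ Set.Ioo (0 : ℝ) 1)
    (hmono : ∀ x y, μ * ‖x - y‖ ^ 2 ≤ ⟪x - y, M x - M y⟫)
    (hlip : ∀ x y, ‖M x - M y‖ ≤ L₀ * ‖x - y‖)
    (A : ℝ → Matrix (Fin 2) (Fin 2) ℝ)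
    (hA : ∀ α, A α =
      !![α ^ 2 * L₀ ^ 2 / N - 2 * α * μ / N + 1,
          α ^ 2 * L * L₀ / Real.sqrt N + α * (L + σ * L₀ / Real.sqrt N);
        α ^ 2 * L * L₀ / Real.sqrt N + α * (L + σ * L₀ / Real.sqrt N),
          α ^ 2 * L ^ 2 + 2 * α * σ ^ 2 * L + σ ^ 2]) :
    ∃ αbar > 0, ∀ α : ℝ, 0 < α → α < αbar →
      (0 < A α 0 0 ∧ A α 0 0 < 1) ∧ (1 - A α).PosDef ∧ specRad (A α) < 1 := by
  obtain ⟨hσ0, hσ1⟩ := hσ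
  have hL : 0 < L := hμ.trans_le hμL
  have hL₀ : 0 < L₀ := hL.trans_le hLL₀
  have hNr : (1 : ℝ) ≤ (N : ℝ) := by exact_mod_cast hN
  have hNr0 : (0 : ℝ) < (N : ℝ) := by linarith
  have hs : 0 < Real.sqrt N := Real.sqrt_pos.2 hNr0
  have h1σ : 0 < 1 - σ ^ 2 := by nlinarith
  have hσLs : 0 ≤ σ * L₀ / Real.sqrt N := div_nonneg (mul_nonneg hσ0.le hL₀.le) hs.le
  have hLLs : 0 ≤ L * L₀ / Real.sqrt N := div_nonneg (mul_nonneg hL.le hL₀.le) hs.le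
  have hcpos : 0 < L + σ * L₀ / Real.sqrt N + L * L₀ / Real.sqrt N := by linarith
  refine ⟨min 1 (min (μ / L₀ ^ 2) (min ((N : ℝ) / (4 * μ))
      (min (σ / (2 * (L + σ * L₀ / Real.sqrt N + L * L₀ / Real.sqrt N)))
        (min ((1 - σ ^ 2) / (2 * (2 * σ ^ 2 * L + L ^ 2)))
          (μ * (1 - σ ^ 2) /
            (2 * (N : ℝ) * (L + σ * L₀ / Real.sqrt N + L * L₀ / Real.sqrt N) ^ 2)))))),
    ?_, ?_⟩
  · refine lt_min one_pos (lt_min (div_pos hμ (pow_pos hL₀ 2))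
      (lt_min (div_pos hNr0 (by linarith))
        (lt_min (div_pos hσ0 (by linarith))
          (lt_min (div_pos h1σ (by positivity))
            (div_pos (mul_pos hμ h1σ)
              (mul_pos (mul_pos two_pos hNr0) (pow_pos hcpos 2)))))))
  · intro α hα0 hαlt
    have hα1 : α < 1 := lt_of_lt_of_le hαlt (min_le_left _ _)
    have hr1 := (min_le_right 1 _).trans' hαlt.le
    have hα2 : α < μ / L₀ ^ 2 :=
      lt_of_lt_of_le hαlt ((min_le_right _ _).trans (min_le_left _ _))
    have hα3 : α < (N : ℝ) / (4 * μ) :=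
      lt_of_lt_of_le hαlt ((min_le_right _ _).trans ((min_le_right _ _).trans
        (min_le_left _ _)))
    have hα4 : α < σ / (2 * (L + σ * L₀ / Real.sqrt N + L * L₀ / Real.sqrt N)) :=
      lt_of_lt_of_le hαlt ((min_le_right _ _).trans ((min_le_right _ _).trans
        ((min_le_right _ _).trans (min_le_left _ _))))
    have hα5 : α < (1 - σ ^ 2) / (2 * (2 * σ ^ 2 * L + L ^ 2)) :=
      lt_of_lt_of_le hαlt ((min_le_right _ _).trans ((min_le_right _ _).trans
        ((min_le_right _ _).trans ((min_le_right _ _).trans (min_le_left _ _)))))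
    have hα6 : α < μ * (1 - σ ^ 2) /
        (2 * (N : ℝ) * (L + σ * L₀ / Real.sqrt N + L * L₀ / Real.sqrt N) ^ 2) :=
      lt_of_lt_of_le hαlt ((min_le_right _ _).trans ((min_le_right _ _).trans
        ((min_le_right _ _).trans ((min_le_right _ _).trans (min_le_right _ _)))))
    obtain ⟨⟨he1p, he1l⟩, ⟨he3p, he3l⟩, htr, hdA, hdI⟩ :=
      aux_ineqs hμ hμL hLL₀ hσ0 hσ1 hNr hs hα0 hα1 hα2 hα3 hα4 hα5 hα6
    have hAα := hA α
    refine ⟨⟨?_, ?_⟩, ?_, ?_⟩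
    · rw [hAα]; simpa using he1p
    · rw [hAα]; simpa using he1l
    · rw [hAα, one_sub_fin_two]
      refine posdef_fin_two (by linarith) ?_
      rw [neg_sq]
      exact hdI
    · rw [hAα]
      exact specRad_fin_two_lt_one he1p he3p hdA htr hdI
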